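/- For all n, k ≥ 0, g_{n,k}(x) := (x-1)^{-k} Σ_{j=0}^{k} C(k,j) f_{n+j}(x) is a polynomial with integer coefficients of degree 2n + k. -/
import Mathlib


open Polynomial

/-- f 0 = 2, f 1 = X^2 - 4X + 1, f (n+2) = (X^2-4X+1) f (n+1) - X^2 f n. -/
noncomputable def madanF : ℕ → Polynomial ℤ
  | 0 => 2
  | 1 => X ^ 2 - 4 * X + 1
  | (n + 2) => (X ^ 2 - 4 * X + 1) * madanF (n + 1) - X ^ 2 * madanF n

/-- Σ_{j=0}^{k} C(k,j) f_{n+j}, the numerator of g_{n,k}. -/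
noncomputable def gNum (n k : ℕ) : Polynomial ℤ :=
  ∑ j ∈ Finset.range (k + 1), (k.choose j : ℤ) • madanF (n + j)

lemma madanF_eval1 : ∀ n, (madanF n).eval 1 = 2 * (-1)^n
  | 0 => by simp [madanF]
  | 1 => by simp [madanF]
  | (n+2) => by
      rw [madanF]
      simp [madanF_eval1 (n+1), madanF_eval1 n]
      ring

lemma madanF_deg : ∀ n, (madanF n).natDegree = 2*n ∧ madanF n ≠ 0
  | 0 => by constructor <;> simp [madanF]
  | 1 => by
      constructor
      · rw [madanF]; compute_degree!
      · rw [madanF]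
        refine ne_zero_of_natDegree_gt (n := 0) ?_
        have : (X^2 - 4*X + 1 : Polynomial ℤ).natDegree = 2 := by compute_degree!
        omega
  | (n+2) => by
      obtain ⟨d1, h1⟩ := madanF_deg (n+1)
      obtain ⟨d0, h0⟩ := madanF_deg n
      have hq : (X^2 - 4*X + 1 : Polynomial ℤ).natDegree = 2 := by compute_degree!
      have hqne : (X^2 - 4*X + 1 : Polynomial ℤ) ≠ 0 :=
        ne_zero_of_natDegree_gt (n := 0) (by omega)
      have hm : ((X^2 - 4*X + 1 : Polynomial ℤ) * madanF (n+1)).natDegree = 2*(n+2) := by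
        rw [natDegree_mul hqne h1, hq, d1]; ring
      have hlt : ((X^2 : Polynomial ℤ) * madanF n).natDegree < ((X^2 - 4*X + 1 : Polynomial ℤ) * madanF (n+1)).natDegree := by
        rw [hm, natDegree_mul (pow_ne_zero 2 X_ne_zero) h0, natDegree_X_pow, d0]; omega
      rw [madanF]
      refine ⟨by rw [natDegree_sub_eq_left_of_natDegree_lt hlt, hm], ?_⟩
      intro h
      rw [sub_eq_zero] at h
      rw [h] at hlt; omega

lemma gNum_zero (n : ℕ) : gNum n 0 = madanF n := by
  simp [gNum]

lemma gNum_one (n : ℕ) : gNum n 1 = madanF n + madanF (n + 1) := by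
  simp [gNum, Finset.sum_range_succ]

lemma gNum_pascal (n k : ℕ) : gNum n (k+1) = gNum n k + gNum (n+1) k := by
  unfold gNum
  rw [Finset.sum_range_succ' (fun j => (((k+1).choose j : ℤ)) • madanF (n + j))]
  have step : ∀ j ∈ Finset.range (k+1), (((k+1).choose (j+1) : ℤ)) • madanF (n + (j+1))
      = (k.choose j : ℤ) • madanF (n+1+j) + (k.choose (j+1) : ℤ) • madanF (n + (j+1)) := by
    intro j _
    rw [Nat.choose_succ_succ]
    push_cast
    rw [add_smul, show n+1+j = n+(j+1) from by omega]
  rw [Finset.sum_congr rfl step, Finset.sum_add_distrib]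
  have h1 : ∑ j ∈ Finset.range (k+1), ((k.choose j : ℤ)) • madanF (n + j)
      = (k.choose 0 : ℤ) • madanF (n + 0) + ∑ j ∈ Finset.range k, ((k.choose (j+1) : ℤ)) • madanF (n + (j+1)) := by
    rw [Finset.sum_range_succ' (fun j => ((k.choose j : ℤ)) • madanF (n + j))]
    ring
  have h2 : ∑ j ∈ Finset.range (k+1), ((k.choose (j+1) : ℤ)) • madanF (n + (j+1))
      = ∑ j ∈ Finset.range k, ((k.choose (j+1) : ℤ)) • madanF (n + (j+1)) := by
    rw [Finset.sum_range_succ]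
    simp [Nat.choose_succ_self]
  rw [h2, h1]
  simp
  ring

lemma gNum_rec_n (n k : ℕ) : gNum (n+2) k = (X^2 - 4*X + 1) * gNum (n+1) k - X^2 * gNum n k := by
  unfold gNum
  rw [Finset.mul_sum, Finset.mul_sum, ← Finset.sum_sub_distrib]
  refine Finset.sum_congr rfl fun j _ => ?_
  rw [show n+2+j = (n+j)+2 from by omega, madanF,
    show n+j+1 = n+1+j from by omega, smul_sub, mul_smul_comm, mul_smul_comm]

lemma gNum_rec_k (n k : ℕ) :
    gNum n (k+2) = (X-1) * (X-3) * gNum n (k+1) - 2 * (X-1)^2 * gNum n k := by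
  rw [gNum_pascal n (k+1), gNum_pascal n k, gNum_pascal (n+1) k, gNum_rec_n n k]
  ring

lemma gNum_one_deg (n : ℕ) : (gNum n 1).natDegree = 2*n + 2 := by
  rw [gNum_one]
  rw [natDegree_add_eq_right_of_natDegree_lt (by rw [(madanF_deg n).1, (madanF_deg (n+1)).1]; omega)]
  rw [(madanF_deg (n+1)).1]; ring

lemma main : ∀ k n : ℕ, ∃ g : Polynomial ℤ,
    (X - 1) ^ k * g = gNum n k ∧ g.natDegree = 2 * n + k
  | 0, n => ⟨madanF n, by simp [gNum_zero], by rw [(madanF_deg n).1]; ring⟩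
  | 1, n => by
      have hroot : IsRoot (gNum n 1) 1 := by
        simp only [IsRoot, gNum_one, eval_add, madanF_eval1]
        ring
      obtain ⟨g, hg⟩ := (dvd_iff_isRoot.mpr hroot : (X - C 1) ∣ gNum n 1)
      have hC : (X - C 1 : Polynomial ℤ) = X - 1 := by rw [map_one]
      have hne : gNum n 1 ≠ 0 := by
        refine ne_zero_of_natDegree_gt (n := 0) ?_
        rw [gNum_one_deg]; omega
      have hgne : g ≠ 0 := by
        rintro rfl; rw [mul_zero] at hg; exact hne hg
      have hdeg : 1 + g.natDegree = 2*n + 2 := by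
        have := gNum_one_deg n
        rw [hg, natDegree_mul (X_sub_C_ne_zero 1) hgne, natDegree_X_sub_C] at this
        omega
      exact ⟨g, by rw [pow_one, ← hC, ← hg], by omega⟩
  | (k+2), n => by
      obtain ⟨g1, h1, d1⟩ := main (k+1) n
      obtain ⟨g0, h0, d0⟩ := main k n
      refine ⟨(X - 3) * g1 - 2 * g0, ?_, ?_⟩
      · rw [gNum_rec_k, ← h1, ← h0]
        ring
      · have hXne : (X - 3 : Polynomial ℤ) ≠ 0 := by
          rw [show (3 : Polynomial ℤ) = C 3 by norm_num]
          exact X_sub_C_ne_zero 3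
        have hg1ne : g1 ≠ 0 := ne_zero_of_natDegree_gt (n := 0) (by omega)
        have hX3 : (X - 3 : Polynomial ℤ).natDegree = 1 := by compute_degree!
        have hmul : ((X - 3 : Polynomial ℤ) * g1).natDegree = 2*n + (k+2) := by
          rw [natDegree_mul hXne hg1ne, hX3, d1]; ring
        have hlt : ((2 : Polynomial ℤ) * g0).natDegree < ((X - 3 : Polynomial ℤ) * g1).natDegree := by
          have := natDegree_mul_le (p := (2 : Polynomial ℤ)) (q := g0)
          have h2 : (2 : Polynomial ℤ).natDegree = 0 := natDegree_ofNat 2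
          rw [hmul]; omega
        rw [natDegree_sub_eq_left_of_natDegree_lt hlt, hmul]

theorem stmt_7 : ∀ n k : ℕ, ∃ g : Polynomial ℤ,
    (X - 1) ^ k * g = gNum n k ∧ g.natDegree = 2 * n + k := fun n k => main k n
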